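/- arXiv:1806.00773 — 2 statements merged into one kernel-verified Lean document; each statement's English description precedes it below -/
import Mathlib

section
/- (Continuity of solution, Lemma 4.2 analogue) Suppose x : [0,∞) → ℝ satisfies x(t) = z(t) + q₀ + ∫₀ᵗ h(s,(x(s)−1)⁺)ds − ∫₀ᵗ G(t−s) da(s), where z is continuous, h is bounded on compacts and measurable, G is a continuous CDF, and a(t) = ∫₀ᵗ h(s,(x(s)−1)⁺)ds − (x(t)−1)⁺ + q₀ is nondecreasing. Then t ↦ ∫₀ᵗ G(t−s)da(s) is continuous, and hence x is continuous. -/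
open MeasureTheory intervalIntegral

/-- Continuity of any solution of the key convolution equation: if `x`
satisfies `x(t) = z(t) + q₀ + ∫₀ᵗ h(s,(x(s)−1)⁺)ds − ∫₀ᵗ G(t−s) da(s)` where
`z` is continuous, `h` is measurable and bounded on compacts, `G` is a
continuous CDF and `a(t) = ∫₀ᵗ h(s,(x(s)−1)⁺)ds − (x(t)−1)⁺ + q₀` is
nondecreasing (a Stieltjes function), then `t ↦ ∫₀ᵗ G(t−s)da(s)` is
continuous, and hence `x` is continuous. -/
theorem solution_continuous
    (x z : ℝ → ℝ) (q₀ : ℝ) (h : ℝ → ℝ → ℝ) (G : ℝ → ℝ)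
    (A : StieltjesFunction ℝ)
    (hz : ContinuousOn z (Set.Ici 0))
    (hh_meas : Measurable (Function.uncurry h))
    (hh_bdd : ∀ K : ℝ, ∃ C : ℝ, ∀ s ∈ Set.Icc (0:ℝ) K, ∀ y : ℝ, |h s y| ≤ C)
    (hGcont : Continuous G) (hGmono : Monotone G)
    (hG0 : G 0 = 0) (hG01 : ∀ u, 0 ≤ G u ∧ G u ≤ 1)
    (hA : ∀ t, 0 ≤ t →
      A t = (∫ s in (0:ℝ)..t, h s (max (x s - 1) 0)) - max (x t - 1) 0 + q₀)
    (hx : ∀ t, 0 ≤ t →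
      x t = z t + q₀ + (∫ s in (0:ℝ)..t, h s (max (x s - 1) 0))
            - ∫ s in Set.Ioc (0:ℝ) t, G (t - s) ∂A.measure) :
    ContinuousOn (fun t => ∫ s in Set.Ioc (0:ℝ) t, G (t - s) ∂A.measure)
      (Set.Ici 0) ∧
    ContinuousOn x (Set.Ici 0) := by
  classical
  set μ : Measure ℝ := A.measure with hμ
  set g : ℝ → ℝ := fun s => max (x s - 1) 0 with hgdef
  set f : ℝ → ℝ := fun s => h s (g s) with hfdef
  set F : ℝ → ℝ := fun t => ∫ s in (0:ℝ)..t, f s with hFdef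
  set I : ℝ → ℝ := fun t => ∫ s in Set.Ioc (0:ℝ) t, G (t - s) ∂μ with hIdef
  -- relation g = F + q₀ - A on [0,∞)
  have hgF : ∀ s : ℝ, 0 ≤ s → g s = F s + q₀ - A s := by
    intro s hs
    have := hA s hs
    simp only [hgdef, hFdef, hfdef] at this ⊢
    linarith
  -- the set of times where f is integrable
  set U : Set ℝ := {t : ℝ | IntegrableOn f (Set.Ioc 0 t) volume} with hUdef
  have hUord : U.OrdConnected := by
    constructor
    intro a ha b hb c hc
    exact hb.mono_set (Set.Ioc_subset_Ioc_right hc.2)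
  have hUmeas : MeasurableSet U := hUord.measurableSet
  have hFzero : ∀ t : ℝ, 0 ≤ t → t ∉ U → F t = 0 := by
    intro t ht htU
    have : F t = ∫ s in Set.Ioc (0:ℝ) t, f s := intervalIntegral.integral_of_le ht
    rw [this]
    exact integral_undef htU
  -- continuity of F on any set of nonnegative integrability times
  have contF : ∀ V : Set ℝ, (∀ t ∈ V, 0 ≤ t ∧ t ∈ U) → ContinuousOn F V := by
    intro V hV t₀ ht₀
    obtain ⟨C, hC⟩ := hh_bdd (t₀ + 1)
    have ht₀0 : 0 ≤ t₀ := (hV t₀ ht₀).1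
    have hC0 : 0 ≤ C := le_trans (abs_nonneg _) (hC 0 ⟨le_refl 0, by linarith⟩ 0)
    have key : ∀ a b : ℝ, 0 ≤ a → a ≤ b → b ∈ U → b ≤ t₀ + 1 →
        |F b - F a| ≤ C * (b - a) := by
      intro a b ha hab hbU hble
      have hb0 : 0 ≤ b := le_trans ha hab
      have h0a : IntervalIntegrable f volume 0 a :=
        (intervalIntegrable_iff_integrableOn_Ioc_of_le ha).2
          (hbU.mono_set (Set.Ioc_subset_Ioc_right hab))
      have hab' : IntervalIntegrable f volume a b :=
        (intervalIntegrable_iff_integrableOn_Ioc_of_le hab).2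
          (hbU.mono_set (Set.Ioc_subset_Ioc_left ha))
      have hsplit : F a + ∫ s in a..b, f s = F b :=
        intervalIntegral.integral_add_adjacent_intervals h0a hab'
      have hbound : |∫ s in a..b, f s| ≤ C * |b - a| := by
        rw [← Real.norm_eq_abs]
        apply intervalIntegral.norm_integral_le_of_norm_le_const
        intro s hs
        rw [Set.uIoc_of_le hab] at hs
        have hs0 : 0 ≤ s := le_trans ha hs.1.le
        exact hC s ⟨hs0, le_trans hs.2 hble⟩ (g s)
      have : F b - F a = ∫ s in a..b, f s := by linarith
      rw [this]
      calc |∫ s in a..b, f s| ≤ C * |b - a| := hbound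
        _ = C * (b - a) := by rw [abs_of_nonneg (by linarith)]
    rw [Metric.continuousWithinAt_iff]
    intro ε hε
    refine ⟨min 1 (ε / (C + 1)), by positivity, ?_⟩
    intro t htV hdist
    have ht0 : 0 ≤ t := (hV t htV).1
    have htU : t ∈ U := (hV t htV).2
    have ht₀U : t₀ ∈ U := (hV t₀ ht₀).2
    have hd1 : |t - t₀| < 1 := lt_of_lt_of_le (by simpa [Real.dist_eq] using hdist) (min_le_left _ _)
    have hd2 : |t - t₀| < ε / (C + 1) :=
      lt_of_lt_of_le (by simpa [Real.dist_eq] using hdist) (min_le_right _ _)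
    have hmain : |F t - F t₀| ≤ C * |t - t₀| := by
      rcases le_total t t₀ with hle | hle
      · have hk := key t t₀ ht0 hle ht₀U (by linarith)
        calc |F t - F t₀| = |F t₀ - F t| := abs_sub_comm _ _
          _ ≤ C * (t₀ - t) := hk
          _ = C * |t - t₀| := by rw [abs_of_nonpos (by linarith)]; ring
      · have hle1 : t ≤ t₀ + 1 := by
          have := le_trans (le_abs_self (t - t₀)) hd1.le
          linarith
        have hk := key t₀ t ht₀0 hle htU hle1
        calc |F t - F t₀| ≤ C * (t - t₀) := hk
          _ = C * |t - t₀| := by rw [abs_of_nonneg (by linarith)]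
    rw [Real.dist_eq]
    have habs : 0 ≤ |t - t₀| := abs_nonneg _
    calc |F t - F t₀| ≤ C * |t - t₀| := hmain
      _ ≤ (C + 1) * |t - t₀| := by nlinarith
      _ < (C + 1) * (ε / (C + 1)) := by
          apply mul_lt_mul_of_pos_left hd2 (by linarith)
      _ = ε := by field_simp
  -- measurability of A
  have hAmeas : Measurable (A : ℝ → ℝ) := A.mono.measurable
  -- g is a.e. measurable on every Ioc 0 t
  have hg_aem : ∀ t : ℝ, AEMeasurable g (volume.restrict (Set.Ioc 0 t)) := by
    intro t
    have hs₁meas : MeasurableSet (Set.Ioc (0:ℝ) t ∩ U) := measurableSet_Ioc.inter hUmeas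
    have hs₂meas : MeasurableSet (Set.Ioc (0:ℝ) t \ U) := measurableSet_Ioc.diff hUmeas
    have hVsub : Set.Ioc (0:ℝ) t ∩ U ⊆ U ∩ Set.Ici 0 := by
      intro s hs; exact ⟨hs.2, hs.1.1.le⟩
    have hUIci : MeasurableSet (U ∩ Set.Ici (0:ℝ)) := hUmeas.inter measurableSet_Ici
    have hFcontU : ContinuousOn F (U ∩ Set.Ici 0) := by
      apply contF
      intro s hs; exact ⟨hs.2, hs.1⟩
    have hF_aem : AEMeasurable F (volume.restrict (Set.Ioc 0 t ∩ U)) := by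
      have h0 : AEMeasurable F (volume.restrict (U ∩ Set.Ici 0)) := hFcontU.aemeasurable hUIci
      exact h0.mono_measure (Measure.restrict_mono hVsub le_rfl)
    have h1 : AEMeasurable g (volume.restrict (Set.Ioc 0 t ∩ U)) := by
      have hm : AEMeasurable (fun s => F s + q₀ - A s) (volume.restrict (Set.Ioc 0 t ∩ U)) :=
        (hF_aem.add aemeasurable_const).sub hAmeas.aemeasurable
      apply hm.congr
      rw [Filter.EventuallyEq, ae_restrict_iff' hs₁meas]
      exact Filter.Eventually.of_forall fun s hs => (hgF s hs.1.1.le).symm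
    have h2 : AEMeasurable g (volume.restrict (Set.Ioc 0 t \ U)) := by
      have hm : AEMeasurable (fun s => (0:ℝ) + q₀ - A s) (volume.restrict (Set.Ioc 0 t \ U)) :=
        (aemeasurable_const.add aemeasurable_const).sub hAmeas.aemeasurable
      apply hm.congr
      rw [Filter.EventuallyEq, ae_restrict_iff' hs₂meas]
      refine Filter.Eventually.of_forall fun s hs => ?_
      have := hgF s hs.1.1.le
      rw [hFzero s hs.1.1.le hs.2] at this
      simpa using this.symm
    have hsplit : volume.restrict (Set.Ioc (0:ℝ) t) =
        volume.restrict (Set.Ioc 0 t ∩ U) + volume.restrict (Set.Ioc 0 t \ U) := by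
      have hd : Disjoint (Set.Ioc (0:ℝ) t ∩ U) (Set.Ioc (0:ℝ) t \ U) :=
        Set.disjoint_left.2 fun a ha hb => hb.2 ha.2
      have h' := Measure.restrict_union (μ := volume) hd hs₂meas
      rw [Set.inter_union_diff] at h'
      exact h'
    rw [hsplit]
    exact h1.add_measure h2
  -- f is integrable on every Ioc 0 t
  have hf_int : ∀ t : ℝ, IntegrableOn f (Set.Ioc 0 t) volume := by
    intro t
    have hfm : AEStronglyMeasurable f (volume.restrict (Set.Ioc 0 t)) := by
      have : AEMeasurable (fun s => (s, g s)) (volume.restrict (Set.Ioc 0 t)) :=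
        aemeasurable_id.prodMk (hg_aem t)
      exact (hh_meas.comp_aemeasurable this).aestronglyMeasurable
    obtain ⟨C, hC⟩ := hh_bdd (max t 0)
    haveI : IsFiniteMeasure (volume.restrict (Set.Ioc (0:ℝ) t)) := by
      constructor
      rw [Measure.restrict_apply_univ]
      exact measure_Ioc_lt_top
    refine ⟨hfm, HasFiniteIntegral.of_bounded (C := C) ?_⟩
    rw [ae_restrict_iff' measurableSet_Ioc]
    refine Filter.Eventually.of_forall fun s hs => ?_
    have : s ∈ Set.Icc 0 (max t 0) := ⟨hs.1.le, le_trans hs.2 (le_max_left _ _)⟩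
    simpa [hfdef, Real.norm_eq_abs] using hC s this (g s)
  have hFcont : ContinuousOn F (Set.Ici 0) :=
    contF (Set.Ici 0) fun t ht => ⟨ht, hf_int t⟩
  -- integrability of G-convolutions against μ
  have hGint : ∀ a b t : ℝ, IntegrableOn (fun s => G (t - s)) (Set.Ioc a b) μ := by
    intro a b t
    have : IntegrableOn (fun s => G (t - s)) (Set.Icc a b) μ :=
      ContinuousOn.integrableOn_compact isCompact_Icc
        ((hGcont.comp (continuous_const.sub continuous_id)).continuousOn)
    exact this.mono_set Set.Ioc_subset_Icc_self
  have hμfin : ∀ a b : ℝ, μ (Set.Ioc a b) < ⊤ := by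
    intro a b
    rw [hμ, A.measure_Ioc]
    exact ENNReal.ofReal_lt_top
  -- key difference estimate for I
  have hIdiff : ∀ t₁ t₂ : ℝ, 0 ≤ t₁ → t₁ ≤ t₂ → ∀ ε' : ℝ, 0 ≤ ε' →
      (∀ s ∈ Set.Ioc (0:ℝ) t₁, G (t₂ - s) - G (t₁ - s) ≤ ε') →
      |I t₂ - I t₁| ≤ G (t₂ - t₁) * (μ (Set.Ioc t₁ t₂)).toReal
        + ε' * (μ (Set.Ioc 0 t₁)).toReal := by
    intro t₁ t₂ ht₁ h12 ε' hε' hεbd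
    have hunion : Set.Ioc (0:ℝ) t₁ ∪ Set.Ioc t₁ t₂ = Set.Ioc 0 t₂ :=
      Set.Ioc_union_Ioc_eq_Ioc ht₁ h12
    have hsplit : I t₂ = (∫ s in Set.Ioc (0:ℝ) t₁, G (t₂ - s) ∂μ)
        + ∫ s in Set.Ioc t₁ t₂, G (t₂ - s) ∂μ := by
      rw [hIdef]
      simp only
      rw [← hunion, setIntegral_union (Set.Ioc_disjoint_Ioc_of_le le_rfl) measurableSet_Ioc
        (hGint 0 t₁ t₂) (hGint t₁ t₂ t₂)]
    have hsub : (∫ s in Set.Ioc (0:ℝ) t₁, G (t₂ - s) ∂μ) - I t₁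
        = ∫ s in Set.Ioc (0:ℝ) t₁, (G (t₂ - s) - G (t₁ - s)) ∂μ := by
      rw [hIdef]
      simp only
      rw [integral_sub (hGint 0 t₁ t₂) (hGint 0 t₁ t₁)]
    have hterm2_nonneg : 0 ≤ ∫ s in Set.Ioc t₁ t₂, G (t₂ - s) ∂μ :=
      setIntegral_nonneg measurableSet_Ioc fun s _ => (hG01 _).1
    have hterm1_nonneg : 0 ≤ ∫ s in Set.Ioc (0:ℝ) t₁, (G (t₂ - s) - G (t₁ - s)) ∂μ :=
      setIntegral_nonneg measurableSet_Ioc fun s _ => by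
        have : G (t₁ - s) ≤ G (t₂ - s) := hGmono (by linarith)
        linarith
    have hterm2_le : (∫ s in Set.Ioc t₁ t₂, G (t₂ - s) ∂μ)
        ≤ G (t₂ - t₁) * (μ (Set.Ioc t₁ t₂)).toReal := by
      have : (∫ s in Set.Ioc t₁ t₂, G (t₂ - s) ∂μ)
          ≤ ∫ _s in Set.Ioc t₁ t₂, G (t₂ - t₁) ∂μ := by
        apply setIntegral_mono_on (hGint t₁ t₂ t₂)
          (integrableOn_const (hμfin t₁ t₂).ne) measurableSet_Ioc
        intro s hs
        exact hGmono (by linarith [hs.1])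
      rw [setIntegral_const] at this
      rw [mul_comm]
      simpa [Measure.real] using this
    have hterm1_le : (∫ s in Set.Ioc (0:ℝ) t₁, (G (t₂ - s) - G (t₁ - s)) ∂μ)
        ≤ ε' * (μ (Set.Ioc (0:ℝ) t₁)).toReal := by
      have : (∫ s in Set.Ioc (0:ℝ) t₁, (G (t₂ - s) - G (t₁ - s)) ∂μ)
          ≤ ∫ _s in Set.Ioc (0:ℝ) t₁, ε' ∂μ := by
        apply setIntegral_mono_on ((hGint 0 t₁ t₂).sub (hGint 0 t₁ t₁))
          (integrableOn_const (hμfin 0 t₁).ne) measurableSet_Ioc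
        exact hεbd
      rw [setIntegral_const] at this
      rw [mul_comm]
      simpa [Measure.real] using this
    have heq : I t₂ - I t₁ = (∫ s in Set.Ioc (0:ℝ) t₁, (G (t₂ - s) - G (t₁ - s)) ∂μ)
        + ∫ s in Set.Ioc t₁ t₂, G (t₂ - s) ∂μ := by
      rw [hsplit, ← hsub]; ring
    rw [heq, abs_of_nonneg (by linarith)]
    linarith
  -- continuity of I on [0,∞)
  have hIcont : ContinuousOn I (Set.Ici 0) := by
    intro t₀ ht₀
    have ht₀0 : (0:ℝ) ≤ t₀ := ht₀
    rw [Metric.continuousWithinAt_iff]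
    intro ε hε
    set T : ℝ := t₀ + 1 with hT
    set M : ℝ := (μ (Set.Ioc (0:ℝ) T)).toReal with hM
    have hM0 : 0 ≤ M := ENNReal.toReal_nonneg
    set ε₁ : ℝ := ε / (2 * (M + 1)) with hε₁
    have hε₁pos : 0 < ε₁ := by positivity
    have hucont : UniformContinuousOn G (Set.Icc (-1 : ℝ) T) :=
      isCompact_Icc.uniformContinuousOn_of_continuous hGcont.continuousOn
    obtain ⟨δ₁, hδ₁pos, hδ₁⟩ := Metric.uniformContinuousOn_iff.1 hucont ε₁ hε₁pos
    refine ⟨min δ₁ 1, by positivity, ?_⟩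
    intro t ht hdist
    have ht0 : (0:ℝ) ≤ t := ht
    set t₁ : ℝ := min t t₀ with ht₁
    set t₂ : ℝ := max t t₀ with ht₂
    have h12 : t₁ ≤ t₂ := min_le_max
    have ht₁0 : 0 ≤ t₁ := le_min ht0 ht₀0
    have hdd : t₂ - t₁ = |t - t₀| := by
      rcases le_total t t₀ with hle | hle
      · rw [ht₁, ht₂, min_eq_left hle, max_eq_right hle, abs_of_nonpos (by linarith)]; ring
      · rw [ht₁, ht₂, min_eq_right hle, max_eq_left hle, abs_of_nonneg (by linarith)]
    have hdist' : |t - t₀| < min δ₁ 1 := by simpa [Real.dist_eq] using hdist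
    have hdδ : t₂ - t₁ < δ₁ := by
      rw [hdd]; exact lt_of_lt_of_le hdist' (min_le_left _ _)
    have hd1 : t₂ - t₁ < 1 := by
      rw [hdd]; exact lt_of_lt_of_le hdist' (min_le_right _ _)
    have ht₂T : t₂ ≤ T := by
      rcases le_total t t₀ with hle | hle
      · rw [ht₂, max_eq_right hle, hT]; linarith
      · rw [ht₂, max_eq_left hle, hT]
        have habs1 : |t - t₀| < 1 := by rw [← hdd]; exact hd1
        have := lt_of_le_of_lt (le_abs_self (t - t₀)) habs1
        linarith
    have ht₁T : t₁ ≤ T := le_trans h12 ht₂T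
    -- bound on the G-increment over [0, t₁]
    have hεbd : ∀ s ∈ Set.Ioc (0:ℝ) t₁, G (t₂ - s) - G (t₁ - s) ≤ ε₁ := by
      intro s hs
      have h1K : t₁ - s ∈ Set.Icc (-1 : ℝ) T := ⟨by linarith [hs.2], by linarith [hs.1]⟩
      have h2K : t₂ - s ∈ Set.Icc (-1 : ℝ) T := ⟨by linarith [hs.2, h12], by linarith [hs.1, ht₂T]⟩
      have := hδ₁ _ h2K _ h1K (by rw [Real.dist_eq]; rw [abs_of_nonneg (by linarith)]; linarith)
      rw [Real.dist_eq] at this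
      exact le_of_lt (lt_of_le_of_lt (le_abs_self _) this)
    -- G(t₂ - t₁) is small
    have hGsmall : G (t₂ - t₁) ≤ ε₁ := by
      have h1K : (0:ℝ) ∈ Set.Icc (-1 : ℝ) T := ⟨by norm_num, by rw [hT]; linarith⟩
      have h2K : t₂ - t₁ ∈ Set.Icc (-1 : ℝ) T := ⟨by linarith, by linarith⟩
      have := hδ₁ _ h2K _ h1K (by rw [Real.dist_eq, sub_zero, abs_of_nonneg (by linarith)]; exact hdδ)
      rw [Real.dist_eq, hG0, sub_zero] at this
      exact le_of_lt (lt_of_le_of_lt (le_abs_self _) this)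
    have hmono1 : (μ (Set.Ioc t₁ t₂)).toReal ≤ M := by
      rw [hM]
      apply ENNReal.toReal_mono (hμfin 0 T).ne
      exact measure_mono (Set.Ioc_subset_Ioc ht₁0 ht₂T)
    have hmono2 : (μ (Set.Ioc (0:ℝ) t₁)).toReal ≤ M := by
      rw [hM]
      apply ENNReal.toReal_mono (hμfin 0 T).ne
      exact measure_mono (Set.Ioc_subset_Ioc le_rfl ht₁T)
    have hbd := hIdiff t₁ t₂ ht₁0 h12 ε₁ hε₁pos.le hεbd
    have hG1 : 0 ≤ G (t₂ - t₁) := (hG01 _).1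
    have htoReal1 : 0 ≤ (μ (Set.Ioc t₁ t₂)).toReal := ENNReal.toReal_nonneg
    have htoReal2 : 0 ≤ (μ (Set.Ioc (0:ℝ) t₁)).toReal := ENNReal.toReal_nonneg
    have hItt : |I t - I t₀| = |I t₂ - I t₁| := by
      rcases le_total t t₀ with hle | hle
      · rw [ht₁, ht₂, min_eq_left hle, max_eq_right hle, abs_sub_comm]
      · rw [ht₁, ht₂, min_eq_right hle, max_eq_left hle]
    rw [Real.dist_eq, hItt]
    calc |I t₂ - I t₁| ≤ G (t₂ - t₁) * (μ (Set.Ioc t₁ t₂)).toReal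
          + ε₁ * (μ (Set.Ioc (0:ℝ) t₁)).toReal := hbd
      _ ≤ ε₁ * M + ε₁ * M := by
          apply add_le_add
          · calc G (t₂ - t₁) * (μ (Set.Ioc t₁ t₂)).toReal ≤ ε₁ * (μ (Set.Ioc t₁ t₂)).toReal :=
                mul_le_mul_of_nonneg_right hGsmall htoReal1
              _ ≤ ε₁ * M := mul_le_mul_of_nonneg_left hmono1 hε₁pos.le
          · exact mul_le_mul_of_nonneg_left hmono2 hε₁pos.le
      _ = ε * (M / (M + 1)) := by rw [hε₁]; field_simp; ring
      _ < ε := by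
          have : M / (M + 1) < 1 := by
            rw [div_lt_one (by linarith)]; linarith
          nlinarith
  refine ⟨hIcont, ?_⟩
  -- continuity of x
  have hxeq : ∀ t ∈ Set.Ici (0:ℝ), x t = z t + q₀ + F t - I t := fun t ht => hx t ht
  have : ContinuousOn (fun t => z t + q₀ + F t - I t) (Set.Ici 0) :=
    (((hz.add continuousOn_const).add hFcont).sub hIcont)
  exact this.congr hxeq
end

section
/- (Lemma A.3, queue upper bound) Suppose q : [0,∞) → ℝ₊ is continuous with q(0) = ∫₀^{ω₀} F^c(s)λ(−s)ds, and suppose for all 0 ≤ s ≤ t, q(t) − q(s) ≤ ∫_s^t H_u(q(u)) du where H_u(y) = λ(u) − ∫₀^{u+ω₀} f(x)λ(u−x)dx whenever y ≥ N_{F,u} := ∫₀^{u+ω₀}F^c(x)λ(u−x)dx, and H_u(y) ≤ λ(u) always. Then q(t) ≤ N_{F,t} = ∫₀^{t+ω₀} F^c(s)λ(t−s)ds for all t ≥ 0. -/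
open MeasureTheory intervalIntegral

/-- Bounded measurable functions are interval integrable. -/
lemma qub_intervalIntegrable_of_bounded (g : ℝ → ℝ) (hg : Measurable g) (C : ℝ)
    (hb : ∀ x, |g x| ≤ C) (a b : ℝ) : IntervalIntegrable g volume a b := by
  constructor <;>
  · refine Integrable.mono' (g := fun _ => C) ?_ (hg.aestronglyMeasurable.restrict) ?_
    · exact integrableOn_const measure_Ioc_lt_top.ne
    · exact Filter.Eventually.of_forall hb

/-- Lemma A.3 (queue upper bound): under the stated structure of the rate
function `H`, any continuous `q` starting from
`q(0) = ∫₀^{ω₀} F^c(s)λ(−s)ds` and satisfying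
`q(t) − q(s) ≤ ∫ₛᵗ H_u(q(u))du` stays below
`N_{F,t} = ∫₀^{t+ω₀} F^c(s)λ(t−s)ds`. -/
theorem queue_upper_bound
    (F f lam : ℝ → ℝ) (ω₀ : ℝ) (hω₀ : 0 ≤ ω₀)
    (hFmono : Monotone F) (hF01 : ∀ x, 0 ≤ F x ∧ F x ≤ 1)
    (hFdens : ∀ x, 0 ≤ x → F x = ∫ u in (0:ℝ)..x, f u)
    (hfpos : ∀ x, 0 ≤ f x) (hf_neg : ∀ x < (0:ℝ), f x = 0)
    (hlam : ∀ x, 0 ≤ lam x) (hlam_meas : Measurable lam)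
    (hlam_bdd : ∃ C, ∀ x, lam x ≤ C)
    (N : ℝ → ℝ)
    (hN : ∀ u, N u = ∫ x in (0:ℝ)..(u + ω₀), (1 - F x) * lam (u - x))
    (hNcont : Continuous N)
    (H : ℝ → ℝ → ℝ)
    (hH_above : ∀ u, 0 ≤ u → ∀ y, N u ≤ y →
      H u y = lam u - ∫ x in (0:ℝ)..(u + ω₀), f x * lam (u - x))
    (hH_le : ∀ u y, H u y ≤ lam u)
    (q : ℝ → ℝ) (hqcont : Continuous q) (hqpos : ∀ t, 0 ≤ q t)
    (hq0 : q 0 = ∫ s in (0:ℝ)..ω₀, (1 - F s) * lam (-s))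
    (hgrowth : ∀ s t, 0 ≤ s → s ≤ t → q t - q s ≤ ∫ u in s..t, H u (q u)) :
    ∀ t, 0 ≤ t → q t ≤ N t := by
  intro t ht
  obtain ⟨C, hC⟩ := hlam_bdd
  have hC0 : 0 ≤ C := le_trans (hlam 0) (hC 0)
  have hFmeas : Measurable F := hFmono.measurable
  have hωt : -ω₀ ≤ t := by linarith
  -- interval integrability of lam
  have hIntLam : ∀ a b : ℝ, IntervalIntegrable lam volume a b := by
    intro a b
    refine qub_intervalIntegrable_of_bounded lam hlam_meas C (fun x => ?_) a b
    rw [abs_of_nonneg (hlam x)]; exact hC x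
  -- interval integrability of shifted lam
  have hIntLamShift : ∀ (c a b : ℝ), IntervalIntegrable (fun x => lam (c - x)) volume a b := by
    intro c a b
    refine qub_intervalIntegrable_of_bounded (fun x => lam (c - x))
      (hlam_meas.comp (measurable_const.sub measurable_id)) C (fun x => ?_) a b
    rw [abs_of_nonneg (hlam _)]; exact hC _
  -- interval integrability of x ↦ g x * lam (c - x) for measurable g with 0 ≤ g ≤ 1
  have hIntGL : ∀ (g : ℝ → ℝ), Measurable g → (∀ x, 0 ≤ g x ∧ g x ≤ 1) →
      ∀ (c a b : ℝ), IntervalIntegrable (fun x => g x * lam (c - x)) volume a b := by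
    intro g hg hg01 c a b
    refine qub_intervalIntegrable_of_bounded (fun x => g x * lam (c - x))
      (hg.mul (hlam_meas.comp (measurable_const.sub measurable_id))) C (fun x => ?_) a b
    rw [abs_of_nonneg (mul_nonneg (hg01 x).1 (hlam _))]
    calc g x * lam (c - x) ≤ 1 * lam (c - x) :=
          mul_le_mul_of_nonneg_right (hg01 x).2 (hlam _)
      _ = lam (c - x) := one_mul _
      _ ≤ C := hC _
  -- interval integrability of y ↦ g (c - y) * lam y for measurable g with 0 ≤ g ≤ 1
  have hIntGL' : ∀ (g : ℝ → ℝ), Measurable g → (∀ x, 0 ≤ g x ∧ g x ≤ 1) →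
      ∀ (c a b : ℝ), IntervalIntegrable (fun y => g (c - y) * lam y) volume a b := by
    intro g hg hg01 c a b
    refine qub_intervalIntegrable_of_bounded (fun y => g (c - y) * lam y)
      ((hg.comp (measurable_const.sub measurable_id)).mul hlam_meas) C (fun y => ?_) a b
    rw [abs_of_nonneg (mul_nonneg (hg01 _).1 (hlam _))]
    calc g (c - y) * lam y ≤ 1 * lam y :=
          mul_le_mul_of_nonneg_right (hg01 _).2 (hlam _)
      _ = lam y := one_mul _
      _ ≤ C := hC _
  -- rewrite N c in convenient form
  have hNform : ∀ c : ℝ, N c = (∫ y in (-ω₀)..c, lam y) - ∫ y in (-ω₀)..c, F (c - y) * lam y := by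
    intro c
    rw [hN c]
    have e1 : (∫ x in (0:ℝ)..(c + ω₀), (1 - F x) * lam (c - x))
        = (∫ x in (0:ℝ)..(c + ω₀), lam (c - x)) - ∫ x in (0:ℝ)..(c + ω₀), F x * lam (c - x) := by
      rw [← intervalIntegral.integral_sub (hIntLamShift c 0 (c + ω₀))
        (hIntGL F hFmeas hF01 c 0 (c + ω₀))]
      apply intervalIntegral.integral_congr
      intro x _
      ring
    rw [e1]
    congr 1
    · have h := intervalIntegral.integral_comp_sub_left (a := (0:ℝ)) (b := c + ω₀) lam c
      rw [h]
      norm_num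
    · have h := intervalIntegral.integral_comp_sub_left (a := (0:ℝ)) (b := c + ω₀)
        (fun y => F (c - y) * lam y) c
      have e2 : (∫ x in (0:ℝ)..(c + ω₀), F x * lam (c - x))
          = ∫ x in (0:ℝ)..(c + ω₀), (fun y => F (c - y) * lam y) (c - x) := by
        apply intervalIntegral.integral_congr
        intro x _
        simp only [sub_sub_cancel]
      rw [e2, h]
      norm_num
  -- q 0 = N 0
  have hq0N : q 0 = N 0 := by
    rw [hq0, hN 0]
    have h0 : (0:ℝ) + ω₀ = ω₀ := zero_add _
    rw [h0]
    apply intervalIntegral.integral_congr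
    intro x _
    simp only [zero_sub]
  -- F 0 = 0
  have hF00 : F 0 = 0 := by
    rw [hFdens 0 le_rfl, intervalIntegral.integral_same]
  by_cases hF0 : ∀ x, 0 ≤ x → F x = 0
  -- Case 1 : F vanishes identically on [0,∞)
  · have hNc : ∀ c : ℝ, 0 ≤ c → N c = ∫ y in (-ω₀)..c, lam y := by
      intro c hc
      rw [hNform c]
      have hz : (∫ y in (-ω₀)..c, F (c - y) * lam y) = ∫ y in (-ω₀)..c, (0:ℝ) := by
        apply intervalIntegral.integral_congr
        intro y hy
        rw [Set.uIcc_of_le (by linarith)] at hy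
        simp only [hF0 (c - y) (by linarith [hy.2]), zero_mul]
      rw [hz, intervalIntegral.integral_zero, sub_zero]
    have hstep1 : q t ≤ q 0 + ∫ u in (0:ℝ)..t, lam u := by
      have h1 := hgrowth 0 t le_rfl ht
      have h2 : (∫ u in (0:ℝ)..t, H u (q u)) ≤ ∫ u in (0:ℝ)..t, lam u := by
        by_cases hi : IntervalIntegrable (fun u => H u (q u)) volume 0 t
        · exact intervalIntegral.integral_mono_on ht hi (hIntLam 0 t)
            (fun u _ => hH_le u (q u))
        · rw [intervalIntegral.integral_undef hi]
          exact intervalIntegral.integral_nonneg ht (fun u _ => hlam u)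
      linarith
    have hadd : (∫ y in (-ω₀)..(0:ℝ), lam y) + (∫ y in (0:ℝ)..t, lam y)
        = ∫ y in (-ω₀)..t, lam y :=
      intervalIntegral.integral_add_adjacent_intervals (hIntLam _ _) (hIntLam _ _)
    rw [hNc t ht]
    rw [hq0N, hNc 0 le_rfl] at hstep1
    linarith
  -- Case 2 : F is somewhere positive, hence f is integrable and a.e. measurable
  · push_neg at hF0
    obtain ⟨x₀, hx₀0, hx₀ne⟩ := hF0
    have hx₀ : 0 < F x₀ := lt_of_le_of_ne (hF01 x₀).1 (Ne.symm hx₀ne)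
    -- a.e. nonzero points
    have hne : ∀ᵐ x : ℝ ∂volume, x ≠ 0 := by
      rw [ae_iff]
      simpa using measure_singleton (0:ℝ)
    -- integrability of f on Ioc 0 b
    have hIoc0 : ∀ b : ℝ, IntegrableOn f (Set.Ioc 0 b) volume := by
      intro b
      set c := max b x₀ with hc
      have hc0 : 0 ≤ c := le_trans hx₀0 (le_max_right b x₀)
      have hFc : 0 < F c := lt_of_lt_of_le hx₀ (hFmono (le_max_right b x₀))
      have hII : IntervalIntegrable f volume 0 c := by
        by_contra hni
        rw [hFdens c hc0, intervalIntegral.integral_undef hni] at hFc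
        exact lt_irrefl 0 hFc
      have := (intervalIntegrable_iff_integrableOn_Ioc_of_le hc0).1 hII
      exact this.mono_set (Set.Ioc_subset_Ioc_right (le_max_left b x₀))
    -- integrability of f on Iic 0
    have hIic : IntegrableOn f (Set.Iic 0) volume := by
      have h0ae : ∀ᵐ x ∂(volume.restrict (Set.Iic (0:ℝ))), f x = 0 := by
        rw [ae_restrict_iff' measurableSet_Iic]
        filter_upwards [hne] with x hx hxle
        exact hf_neg x (lt_of_le_of_ne hxle hx)
      exact (integrable_zero _ _ _).congr (h0ae.mono fun x hx => hx.symm)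
    -- f is interval integrable everywhere
    have hfII : ∀ a b : ℝ, IntervalIntegrable f volume a b := by
      have hon : ∀ a b : ℝ, IntegrableOn f (Set.Ioc a b) volume := by
        intro a b
        have hsub : Set.Ioc a b ⊆ Set.Iic 0 ∪ Set.Ioc 0 (max b 0) := by
          intro x hx
          rcases le_or_gt x 0 with h | h
          · exact Or.inl h
          · exact Or.inr ⟨h, le_trans hx.2 (le_max_left b 0)⟩
        exact (hIic.union (hIoc0 (max b 0))).mono_set hsub
      intro a b
      exact ⟨hon a b, hon b a⟩
    -- f is a.e. measurable
    have hae : AEMeasurable f volume := by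
      have h2 : AEMeasurable f (volume.restrict (Set.Iic (0:ℝ))) := hIic.aemeasurable
      have h3 : AEMeasurable f
          (volume.restrict (Set.Iic (0:ℝ) ∪ ⋃ n : ℕ, Set.Ioc (0:ℝ) (n:ℝ))) :=
        aemeasurable_union_iff.2 ⟨h2, aemeasurable_iUnion_iff.2 fun n => (hIoc0 n).aemeasurable⟩
      have huniv : Set.Iic (0:ℝ) ∪ ⋃ n : ℕ, Set.Ioc (0:ℝ) (n:ℝ) = Set.univ := by
        ext x
        simp only [Set.mem_union, Set.mem_Iic, Set.mem_iUnion, Set.mem_Ioc, Set.mem_univ,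
          iff_true]
        rcases le_or_gt x 0 with h | h
        · exact Or.inl h
        · obtain ⟨n, hn⟩ := exists_nat_ge x
          exact Or.inr ⟨n, h, hn⟩
      rwa [huniv, Measure.restrict_univ] at h3
    -- measurable nonnegative representative of f
    set ftil : ℝ → ℝ := fun x => |hae.mk f x| with hftil_def
    have hftil_meas : Measurable ftil := hae.measurable_mk.abs
    have hftil_nonneg : ∀ x, 0 ≤ ftil x := fun x => abs_nonneg _
    have hff : f =ᵐ[volume] ftil := by
      filter_upwards [hae.ae_eq_mk] with x hx
      rw [hftil_def]
      simp only [← hx, abs_of_nonneg (hfpos x)]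
    have hftilII : ∀ a b : ℝ, IntervalIntegrable ftil volume a b := by
      intro a b
      exact ⟨(hfII a b).1.congr (ae_restrict_of_ae hff),
        (hfII a b).2.congr (ae_restrict_of_ae hff)⟩
    -- the primitive G of ftil
    set G : ℝ → ℝ := fun c => ∫ x in (0:ℝ)..c, ftil x with hG_def
    have hGdiff : ∀ p q : ℝ, (∫ x in p..q, ftil x) = G q - G p := by
      intro p q
      have := intervalIntegral.integral_add_adjacent_intervals
        (hftilII 0 p) (hftilII p q)
      rw [hG_def]
      simp only
      linarith
    have hGF : ∀ c, 0 ≤ c → G c = F c := by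
      intro c hc
      rw [hFdens c hc, hG_def]
      simp only
      apply intervalIntegral.integral_congr_ae
      filter_upwards [hff] with x hx _
      exact hx.symm
    have hG0 : ∀ c, c ≤ 0 → G c = 0 := by
      intro c hc
      have hz : (∫ x in c..(0:ℝ), ftil x) = 0 := by
        have : (∫ x in c..(0:ℝ), ftil x) = ∫ x in c..(0:ℝ), (0:ℝ) := by
          apply intervalIntegral.integral_congr_ae
          filter_upwards [hff, hne] with x hx hx0 hmem
          rw [Set.uIoc_of_le hc] at hmem
          rw [← hx]
          exact hf_neg x (lt_of_le_of_ne hmem.2 hx0)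
        rw [this, intervalIntegral.integral_zero]
      rw [hG_def]
      simp only
      rw [intervalIntegral.integral_symm, hz, neg_zero]
    have hG01 : ∀ c, 0 ≤ G c ∧ G c ≤ 1 := by
      intro c
      rcases le_total c 0 with h | h
      · rw [hG0 c h]; exact ⟨le_rfl, zero_le_one⟩
      · rw [hGF c h]; exact hF01 c
    have hGmeas : Measurable G := by
      have hGeq : G = fun c => F (max c 0) := by
        funext c
        rcases le_total c 0 with h | h
        · rw [hG0 c h, max_eq_right h, hF00]
        · rw [hGF c h, max_eq_left h]
      rw [hGeq]
      exact hFmeas.comp (measurable_id.max measurable_const)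
    -- integrability of y ↦ ftil (u - y) * lam y
    have hSM : ∀ (u a b : ℝ), IntervalIntegrable (fun y => ftil (u - y) * lam y) volume a b := by
      intro u a b
      have h1 : IntervalIntegrable (fun y => ftil (u - y)) volume a b := by
        have h := (hftilII (u - a) (u - b)).comp_sub_left u
        simpa only [sub_sub_cancel] using h
      have hbd : ∃ C', ∀ x, ‖lam x‖ ≤ C' :=
        ⟨C, fun x => by rw [Real.norm_eq_abs, abs_of_nonneg (hlam x)]; exact hC x⟩
      constructor
      · exact (h1.1.bdd_mul hlam_meas.aestronglyMeasurable.restrict (Filter.Eventually.of_forall hbd.choose_spec)).congr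
          (Filter.Eventually.of_forall fun y => mul_comm _ _)
      · exact (h1.2.bdd_mul hlam_meas.aestronglyMeasurable.restrict (Filter.Eventually.of_forall hbd.choose_spec)).congr
          (Filter.Eventually.of_forall fun y => mul_comm _ _)
    -- definition of J'
    set J' : ℝ → ℝ := fun u => ∫ y in (-ω₀)..t, ftil (u - y) * lam y with hJ'_def
    -- bound on J'
    have hJ'0 : ∀ u, 0 ≤ J' u := by
      intro u
      exact intervalIntegral.integral_nonneg hωt
        (fun y _ => mul_nonneg (hftil_nonneg _) (hlam _))
    have hJ'C : ∀ u, J' u ≤ C := by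
      intro u
      have h3 : (∫ y in (-ω₀)..t, ftil (u - y)) = G (u + ω₀) - G (u - t) := by
        have h := intervalIntegral.integral_comp_sub_left (a := -ω₀) (b := t) ftil u
        rw [h, sub_neg_eq_add, hGdiff]
      have hle1 : J' u ≤ ∫ y in (-ω₀)..t, C * ftil (u - y) := by
        apply intervalIntegral.integral_mono_on hωt (hSM u _ _)
        · have h := (hftilII (u - (-ω₀)) (u - t)).comp_sub_left u
          have h2 : IntervalIntegrable (fun y => ftil (u - y)) volume (-ω₀) t := by
            simpa only [sub_sub_cancel] using h
          exact h2.const_mul C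
        · intro y _
          rw [mul_comm C _]
          exact mul_le_mul_of_nonneg_left (hC y) (hftil_nonneg _)
      have hle2 : (∫ y in (-ω₀)..t, C * ftil (u - y)) = C * (G (u + ω₀) - G (u - t)) := by
        rw [intervalIntegral.integral_const_mul, h3]
      have h4 : G (u + ω₀) - G (u - t) ≤ 1 := by
        have := (hG01 (u + ω₀)).2
        have := (hG01 (u - t)).1
        linarith
      calc J' u ≤ C * (G (u + ω₀) - G (u - t)) := by rw [← hle2]; exact hle1
        _ ≤ C * 1 := mul_le_mul_of_nonneg_left h4 hC0
        _ = C := mul_one C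
    -- the contradiction setup
    by_contra hcon
    push_neg at hcon
    set S : Set ℝ := {s : ℝ | s ∈ Set.Icc 0 t ∧ q s ≤ N s} with hS_def
    have hS0 : (0:ℝ) ∈ S := ⟨⟨le_rfl, ht⟩, le_of_eq hq0N⟩
    have hSbdd : BddAbove S := ⟨t, fun s hs => hs.1.2⟩
    have hSclosed : IsClosed S := by
      have : S = Set.Icc 0 t ∩ {s | q s ≤ N s} := rfl
      rw [this]
      exact isClosed_Icc.inter (isClosed_le hqcont hNcont)
    set t₀ : ℝ := sSup S with ht₀_def
    have ht₀S : t₀ ∈ S := hSclosed.csSup_mem ⟨0, hS0⟩ hSbdd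
    have ht₀0 : 0 ≤ t₀ := ht₀S.1.1
    have ht₀t : t₀ ≤ t := ht₀S.1.2
    have hqt₀ : q t₀ ≤ N t₀ := ht₀S.2
    have ht₀lt : t₀ < t := by
      rcases lt_or_eq_of_le ht₀t with h | h
      · exact h
      · exfalso; rw [h] at hqt₀; linarith
    have hNq : ∀ u ∈ Set.Ioc t₀ t, N u ≤ q u := by
      intro u hu
      by_contra hle
      push_neg at hle
      have huS : u ∈ S := ⟨⟨by linarith [hu.1], hu.2⟩, le_of_lt hle⟩
      have := le_csSup hSbdd huS
      linarith [hu.1]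
    -- J' agrees with the integral defining H on (t₀, t]
    have hJeq : ∀ u ∈ Set.Ioc t₀ t,
        (∫ x in (0:ℝ)..(u + ω₀), f x * lam (u - x)) = J' u := by
      intro u hu
      have step1 : (∫ x in (0:ℝ)..(u + ω₀), f x * lam (u - x))
          = ∫ x in (0:ℝ)..(u + ω₀), ftil x * lam (u - x) := by
        apply intervalIntegral.integral_congr_ae
        filter_upwards [hff] with x hx _
        rw [hx]
      have step2 : (∫ x in (0:ℝ)..(u + ω₀), ftil x * lam (u - x))
          = ∫ y in (-ω₀)..u, ftil (u - y) * lam y := by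
        have h := intervalIntegral.integral_comp_sub_left (a := (0:ℝ)) (b := u + ω₀)
          (fun y => ftil (u - y) * lam y) u
        simp only [sub_sub_cancel, sub_zero, sub_add_cancel_left] at h
        rw [← h]
      have hz : (∫ y in u..t, ftil (u - y) * lam y) = 0 := by
        have hcmp : (ftil ∘ fun h => u - h) =ᵐ[volume] (f ∘ fun h => u - h) :=
          (quasiMeasurePreserving_sub_left_of_right_invariant
            (volume : Measure ℝ) u).ae_eq_comp hff.symm
        have : (∫ y in u..t, ftil (u - y) * lam y) = ∫ y in u..t, (0:ℝ) := by
          apply intervalIntegral.integral_congr_ae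
          filter_upwards [hcmp] with y hy hmem
          rw [Set.uIoc_of_le hu.2] at hmem
          have hy' : ftil (u - y) = f (u - y) := hy
          rw [hy', hf_neg (u - y) (by linarith [hmem.1]), zero_mul]
        rw [this, intervalIntegral.integral_zero]
      have hadd : (∫ y in (-ω₀)..u, ftil (u - y) * lam y)
          + (∫ y in u..t, ftil (u - y) * lam y)
          = ∫ y in (-ω₀)..t, ftil (u - y) * lam y :=
        intervalIntegral.integral_add_adjacent_intervals (hSM u _ _) (hSM u _ _)
      rw [step1, step2, hJ'_def]
      simp only
      linarith
    -- Fubini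
    set μ₁ : Measure ℝ := volume.restrict (Set.Ioc t₀ t) with hμ₁
    set ν₁ : Measure ℝ := volume.restrict (Set.Ioc (-ω₀) t) with hν₁
    have hΦmeas : Measurable (fun p : ℝ × ℝ => ftil (p.1 - p.2) * lam p.2) :=
      (hftil_meas.comp (measurable_fst.sub measurable_snd)).mul (hlam_meas.comp measurable_snd)
    have hJ'int : ∀ u, J' u = ∫ y, ftil (u - y) * lam y ∂ν₁ := by
      intro u
      rw [hJ'_def]
      simp only
      rw [intervalIntegral.integral_of_le hωt, hν₁]
    have hnormbd : ∀ u : ℝ, (∫ y, ‖ftil (u - y) * lam y‖ ∂ν₁) ≤ C := by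
      intro u
      have e1 : (∫ y, ‖ftil (u - y) * lam y‖ ∂ν₁) = J' u := by
        rw [hJ'int u]
        apply MeasureTheory.integral_congr_ae
        apply Filter.Eventually.of_forall
        intro y
        simp only [Real.norm_eq_abs, abs_of_nonneg (mul_nonneg (hftil_nonneg _) (hlam _))]
      rw [e1]
      exact hJ'C u
    have hintΦ : Integrable (Function.uncurry (fun u y => ftil (u - y) * lam y)) (μ₁.prod ν₁) := by
      apply (integrable_prod_iff hΦmeas.aestronglyMeasurable).2
      constructor
      · apply Filter.Eventually.of_forall
        intro u
        exact (hSM u (-ω₀) t).1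
      · have hsm : StronglyMeasurable (fun u => ∫ y, ‖ftil (u - y) * lam y‖ ∂ν₁) := by
          have := (hΦmeas.norm.stronglyMeasurable).integral_prod_right' (ν := ν₁)
          exact this
        refine Integrable.mono' (g := fun _ => C)
          (integrableOn_const measure_Ioc_lt_top.ne) hsm.aestronglyMeasurable.restrict ?_
        apply Filter.Eventually.of_forall
        intro u
        rw [Real.norm_eq_abs, abs_of_nonneg (integral_nonneg fun y => norm_nonneg _)]
        exact hnormbd u
    have hswap : (∫ u in t₀..t, J' u)
        = ∫ y in (-ω₀)..t, (G (t - y) - G (t₀ - y)) * lam y := by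
      have h1 : (∫ u in t₀..t, J' u) = ∫ u, (∫ y, ftil (u - y) * lam y ∂ν₁) ∂μ₁ := by
        rw [intervalIntegral.integral_of_le (le_of_lt ht₀lt), hμ₁]
        apply MeasureTheory.integral_congr_ae
        exact Filter.Eventually.of_forall fun u => hJ'int u
      have h2 := MeasureTheory.integral_integral_swap (μ := μ₁) (ν := ν₁)
        (f := fun u y => ftil (u - y) * lam y) hintΦ
      have h3 : (∫ y, (∫ u, ftil (u - y) * lam y ∂μ₁) ∂ν₁)
          = ∫ y in (-ω₀)..t, (G (t - y) - G (t₀ - y)) * lam y := by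
        rw [intervalIntegral.integral_of_le hωt, hν₁]
        apply MeasureTheory.integral_congr_ae
        apply Filter.Eventually.of_forall
        intro y
        have hinner : (∫ u, ftil (u - y) * lam y ∂μ₁) = (G (t - y) - G (t₀ - y)) * lam y := by
          rw [hμ₁, ← intervalIntegral.integral_of_le (le_of_lt ht₀lt)]
          rw [intervalIntegral.integral_mul_const]
          congr 1
          rw [intervalIntegral.integral_comp_sub_right (fun x => ftil x) y, hGdiff]
        exact hinner
      rw [h1, h2, h3]
    -- integrability of J'
    have hJ'II : IntervalIntegrable J' volume t₀ t := by
      have hsm : StronglyMeasurable (fun u => ∫ y, ftil (u - y) * lam y ∂ν₁) :=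
        hΦmeas.stronglyMeasurable.integral_prod_right' (ν := ν₁)
      have hJeq' : J' = fun u => ∫ y, ftil (u - y) * lam y ∂ν₁ := funext fun u => hJ'int u
      refine qub_intervalIntegrable_of_bounded J' ?_ C (fun u => ?_) t₀ t
      · rw [hJeq']; exact hsm.measurable
      · rw [abs_of_nonneg (hJ'0 u)]; exact hJ'C u
    -- compute the H integral
    have hHint : (∫ u in t₀..t, H u (q u))
        = (∫ u in t₀..t, lam u) - ∫ u in t₀..t, J' u := by
      have h1 : (∫ u in t₀..t, H u (q u)) = ∫ u in t₀..t, (lam u - J' u) := by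
        apply intervalIntegral.integral_congr_ae
        apply Filter.Eventually.of_forall
        intro u hu
        rw [Set.uIoc_of_le (le_of_lt ht₀lt)] at hu
        rw [hH_above u (by linarith [hu.1]) (q u) (hNq u hu), hJeq u hu]
      rw [h1, intervalIntegral.integral_sub (hIntLam t₀ t) hJ'II]
    -- compute M t - M t₀ via G
    have hMeq : ∀ c, 0 ≤ c → c ≤ t →
        (∫ y in (-ω₀)..c, F (c - y) * lam y) = ∫ y in (-ω₀)..t, G (c - y) * lam y := by
      intro c hc0 hct
      have hωc : -ω₀ ≤ c := by linarith
      have hadd : (∫ y in (-ω₀)..c, G (c - y) * lam y) + (∫ y in c..t, G (c - y) * lam y)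
          = ∫ y in (-ω₀)..t, G (c - y) * lam y :=
        intervalIntegral.integral_add_adjacent_intervals
          (hIntGL' G hGmeas hG01 c _ _) (hIntGL' G hGmeas hG01 c _ _)
      have h2 : (∫ y in c..t, G (c - y) * lam y) = 0 := by
        have : (∫ y in c..t, G (c - y) * lam y) = ∫ y in c..t, (0:ℝ) := by
          apply intervalIntegral.integral_congr
          intro y hy
          rw [Set.uIcc_of_le hct] at hy
          simp only [hG0 (c - y) (by linarith [hy.1]), zero_mul]
        rw [this, intervalIntegral.integral_zero]
      have h1 : (∫ y in (-ω₀)..c, G (c - y) * lam y)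
          = ∫ y in (-ω₀)..c, F (c - y) * lam y := by
        apply intervalIntegral.integral_congr
        intro y hy
        rw [Set.uIcc_of_le hωc] at hy
        simp only [hGF (c - y) (by linarith [hy.2])]
      linarith
    have hMdiff : (∫ y in (-ω₀)..t, F (t - y) * lam y)
        - (∫ y in (-ω₀)..t₀, F (t₀ - y) * lam y)
        = ∫ y in (-ω₀)..t, (G (t - y) - G (t₀ - y)) * lam y := by
      rw [hMeq t ht le_rfl, hMeq t₀ ht₀0 ht₀t]
      rw [← intervalIntegral.integral_sub (hIntGL' G hGmeas hG01 t _ _)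
        (hIntGL' G hGmeas hG01 t₀ _ _)]
      apply intervalIntegral.integral_congr
      intro y _
      ring
    -- lambda adjacent
    have hlamadd : (∫ y in (-ω₀)..t₀, lam y) + (∫ y in t₀..t, lam y)
        = ∫ y in (-ω₀)..t, lam y :=
      intervalIntegral.integral_add_adjacent_intervals (hIntLam _ _) (hIntLam _ _)
    -- final assembly
    have hgr := hgrowth t₀ t ht₀0 (le_of_lt ht₀lt)
    rw [hHint] at hgr
    have hNt := hNform t
    have hNt₀ := hNform t₀
    rw [hswap, ← hMdiff] at hgr
    -- q t - q t₀ ≤ ∫λ(t₀..t) - (M t - M t₀) = N t - N t₀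
    have : q t ≤ N t := by
      have : N t - N t₀ = (∫ y in t₀..t, lam y)
          - ((∫ y in (-ω₀)..t, F (t - y) * lam y)
            - ∫ y in (-ω₀)..t₀, F (t₀ - y) * lam y) := by
        rw [hNt, hNt₀]; linarith
      linarith
    linarith
end
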